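/- Let ε > 0 and let f(t) = A(t)e^{iφ(t)} be a function of intrinsic-mode type with accuracy ε. Then the anti-holomorphic part of f satisfies ‖P₋f‖²_{L²(0,2π)} ≤ (8π²/‖A‖²_{L²(0,2π)}) · (‖A′‖²_{L^∞} + ε²‖A‖²_{L^∞}) / (inf_{0<t<2π} φ′(t)) · ‖f‖²_{L²(0,2π)}. -/

import Mathlib

open Real MeasureTheory

/-- The `n`-th Fourier coefficient of a `2π`-periodic function,
`f̂(n) = (1/2π) ∫₀^{2π} f(t) e^{-int} dt`. -/
noncomputable def fourierCoef (f : ℝ → ℂ) (n : ℤ) : ℂ :=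
  (1 / (2 * (Real.pi : ℂ))) * ∫ t in (0:ℝ)..(2 * Real.pi), f t * Complex.exp (-(Complex.I * n * t))

set_option maxHeartbeats 1000000 in
/-- Intrinsic-mode type functions are almost holomorphic: by Plancherel,
`‖P₋ f‖²_{L²(0,2π)} = 2π · Σ_{n<0} |f̂(n)|²` is bounded by the stated multiple
of `‖f‖²_{L²(0,2π)}`. -/
theorem imt_almost_holomorphic (ε : ℝ) (hε : 0 < ε) (A φ : ℝ → ℝ) (f : ℝ → ℂ)
    (hA : ContDiff ℝ 1 A) (hAper : Function.Periodic A (2 * π)) (hApos : ∀ t, 0 < A t)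
    (hφ : ContDiff ℝ 2 φ) (m : ℤ) (hφper : ∀ t, φ (t + 2 * π) = φ t + 2 * π * m)
    (hinf : 0 < ⨅ t : ℝ, deriv φ t) (hsup : BddAbove (Set.range (deriv φ)))
    (hA' : ∀ t, |deriv A t| ≤ ε * deriv φ t)
    (hφ'' : ∀ t, |deriv (deriv φ) t| ≤ ε * deriv φ t)
    (hf : ∀ t, f t = (A t : ℂ) * Complex.exp (Complex.I * φ t)) :
    2 * π * ∑' k : ℕ, ‖fourierCoef f (-((k : ℤ) + 1))‖ ^ 2 ≤
      8 * π ^ 2 / (∫ t in (0:ℝ)..(2 * π), A t ^ 2) *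
        ((⨆ t : ℝ, |deriv A t|) ^ 2 + ε ^ 2 * (⨆ t : ℝ, |A t|) ^ 2) /
          sInf (deriv φ '' Set.Ioo 0 (2 * π)) *
        ∫ t in (0:ℝ)..(2 * π), ‖f t‖ ^ 2 := by
  have hπ : (0:ℝ) < π := pi_pos
  -- basic facts about deriv φ
  have hbdd : BddBelow (Set.range (deriv φ)) := by
    by_contra h
    rw [iInf_of_not_bddBelow h] at hinf
    exact lt_irrefl 0 hinf
  set c := ⨅ t : ℝ, deriv φ t with hc
  have hcle : ∀ t, c ≤ deriv φ t := fun t => ciInf_le hbdd t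
  have hφ'pos : ∀ t, 0 < deriv φ t := fun t => lt_of_lt_of_le hinf (hcle t)
  have hφ1 : ContDiff ℝ (1+1 : ℕ) φ := by norm_num; exact hφ
  have hφ'cd : ContDiff ℝ 1 (deriv φ) := (contDiff_succ_iff_deriv.mp hφ1).2.2
  have hφ'cont : Continuous (deriv φ) := hφ'cd.continuous
  have hφ''cont : Continuous (deriv (deriv φ)) := hφ'cd.continuous_deriv le_rfl
  have hAcont : Continuous A := hA.continuous
  have hA'cont : Continuous (deriv A) := hA.continuous_deriv le_rfl
  -- deriv φ is periodic
  have hφ'per : ∀ t, deriv φ (t + 2*π) = deriv φ t := by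
    intro t
    have h1 : (fun s => φ (s + 2*π)) = fun s => φ s + 2*π*m := funext hφper
    have h2 := deriv_comp_add_const φ (2*π) t
    rw [h1] at h2
    rw [← h2, deriv_add_const]
  -- facts about δ
  set δ := sInf (deriv φ '' Set.Ioo 0 (2*π)) with hδdef
  have hne : (deriv φ '' Set.Ioo 0 (2*π)).Nonempty :=
    ⟨deriv φ π, π, ⟨hπ, by linarith⟩, rfl⟩
  have hbddim : BddBelow (deriv φ '' Set.Ioo 0 (2*π)) := by
    refine ⟨c, ?_⟩
    rintro x ⟨t, -, rfl⟩
    exact hcle t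
  have hδc : c ≤ δ := by
    apply le_csInf hne
    rintro x ⟨t, -, rfl⟩
    exact hcle t
  have hδpos : 0 < δ := lt_of_lt_of_le hinf hδc
  have hδ0 : δ ≤ deriv φ 0 := by
    have h0cl : (0:ℝ) ∈ closure (Set.Ioo (0:ℝ) (2*π)) := by
      rw [closure_Ioo (by positivity : (0:ℝ) ≠ 2*π)]
      exact ⟨le_rfl, by positivity⟩
    haveI hnb : (nhdsWithin (0:ℝ) (Set.Ioo 0 (2*π))).NeBot :=
      mem_closure_iff_nhdsWithin_neBot.mp h0cl
    refine ge_of_tendsto (hφ'cont.continuousAt.continuousWithinAt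
      (s := Set.Ioo (0:ℝ) (2*π))) ?_
    filter_upwards [self_mem_nhdsWithin] with x hx
    exact csInf_le hbddim ⟨x, hx, rfl⟩
  have hδle : ∀ t ∈ Set.Icc (0:ℝ) (2*π), δ ≤ deriv φ t := by
    intro t ht
    rcases eq_or_lt_of_le ht.1 with h0 | h0
    · rw [← h0]; exact hδ0
    rcases eq_or_lt_of_le ht.2 with h2 | h2
    · rw [h2]
      have h3 : deriv φ (2*π) = deriv φ 0 := by
        have := hφ'per 0; rwa [zero_add] at this
      rw [h3]; exact hδ0
    · exact csInf_le hbddim ⟨t, ⟨h0, h2⟩, rfl⟩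
  -- facts about the suprema
  set M := ⨆ t : ℝ, |A t| with hMdef
  set M' := ⨆ t : ℝ, |deriv A t| with hM'def
  have habsA : (fun t : ℝ => |A t|) = A := funext fun t => abs_of_pos (hApos t)
  have hbA : BddAbove (Set.range fun t : ℝ => |A t|) := by
    rw [habsA, ← hAper.image_Icc (by positivity) 0]
    exact (isCompact_Icc.image hAcont).bddAbove
  have hMle : ∀ t, A t ≤ M := by
    intro t
    have := le_ciSup hbA t
    rwa [abs_of_pos (hApos t)] at this
  have hM0 : 0 ≤ M := (abs_nonneg (A 0)).trans ((abs_of_pos (hApos 0)).symm ▸ hMle 0)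
  have hbA' : BddAbove (Set.range fun t : ℝ => |deriv A t|) := by
    obtain ⟨B, hB⟩ := hsup
    refine ⟨ε * B, ?_⟩
    rintro x ⟨t, rfl⟩
    exact (hA' t).trans (mul_le_mul_of_nonneg_left (hB (Set.mem_range_self t)) hε.le)
  have hM'le : ∀ t, |deriv A t| ≤ M' := fun t => le_ciSup hbA' t
  have hM'0 : 0 ≤ M' := (abs_nonneg _).trans (hM'le 0)
  set K := M' + ε * M with hKdef
  have hK0 : 0 ≤ K := by positivity
  -- the coefficient bound
  have hcoef : ∀ k : ℕ, ‖fourierCoef f (-((k:ℤ)+1))‖ ≤ K / (δ + ((k:ℝ)+1)) := by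
    intro k
    set p : ℝ := (k:ℝ) + 1 with hp
    have hppos : (0:ℝ) < p := by positivity
    set w : ℝ → ℂ := fun t => Complex.I * (((deriv φ t + p : ℝ)) : ℂ) with hw
    set g : ℝ → ℝ := fun t => φ t + p * t with hg
    set v : ℝ → ℂ := fun t => Complex.exp (Complex.I * ((g t : ℝ) : ℂ)) with hv
    set u : ℝ → ℂ := fun t => ((A t : ℝ) : ℂ) / w t with hu
    set u' : ℝ → ℂ := fun t =>
      (((deriv A t : ℝ) : ℂ) * w t - ((A t : ℝ):ℂ) * (Complex.I * ((deriv (deriv φ) t : ℝ):ℂ)))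
        / w t ^ 2 with hu'
    have hw0 : ∀ t, w t ≠ 0 := fun t =>
      mul_ne_zero Complex.I_ne_zero
        (Complex.ofReal_ne_zero.mpr (ne_of_gt (add_pos (hφ'pos t) hppos)))
    have hwnorm : ∀ t, ‖w t‖ = deriv φ t + p := by
      intro t
      simp only [hw, norm_mul, Complex.norm_I, one_mul, Complex.norm_real, Real.norm_eq_abs]
      exact abs_of_pos (add_pos (hφ'pos t) hppos)
    -- derivatives
    have hAd : ∀ t, HasDerivAt (fun s => ((A s : ℝ):ℂ)) (((deriv A t : ℝ)):ℂ) t := fun t =>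
      ((hA.differentiable one_ne_zero t).hasDerivAt).ofReal_comp
    have hφ'd : ∀ t, HasDerivAt (deriv φ) (deriv (deriv φ) t) t := fun t =>
      ((hφ'cd.differentiable one_ne_zero) t).hasDerivAt
    have hwd : ∀ t, HasDerivAt w (Complex.I * ((deriv (deriv φ) t : ℝ) : ℂ)) t := by
      intro t
      have h1 : HasDerivAt (fun s : ℝ => ((deriv φ s + p : ℝ) : ℂ)) ((deriv (deriv φ) t : ℝ) : ℂ) t :=
        (((hφ'd t).add_const p).ofReal_comp)
      simpa only [hw] using HasDerivAt.const_mul Complex.I h1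
    have hud : ∀ t, HasDerivAt u (u' t) t := by
      intro t
      simpa only [hu, hu'] using (hAd t).fun_div (hwd t) (hw0 t)
    have hgd : ∀ t, HasDerivAt g (deriv φ t + p) t := by
      intro t
      have h1 := ((hφ.differentiable (by norm_num)) t).hasDerivAt
      simpa only [hg, mul_one] using h1.fun_add ((hasDerivAt_id' t).const_mul p)
    have hvd : ∀ t, HasDerivAt v (v t * w t) t := by
      intro t
      have h1 : HasDerivAt (fun s => Complex.I * ((g s : ℝ) : ℂ))
          (Complex.I * ((deriv φ t + p : ℝ) : ℂ)) t :=
        HasDerivAt.const_mul Complex.I ((hgd t).ofReal_comp)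
      simpa only [hv, hw] using h1.cexp
    -- continuity
    have hwcont : Continuous w := by
      simp only [hw]
      exact continuous_const.mul (Complex.continuous_ofReal.comp (hφ'cont.add continuous_const))
    have hgcont : Continuous g := by
      simp only [hg]
      exact hφ.continuous.add (continuous_const.mul continuous_id)
    have hvcont : Continuous v := by
      simp only [hv]
      exact Complex.continuous_exp.comp (continuous_const.mul (Complex.continuous_ofReal.comp hgcont))
    have hu'cont : Continuous u' := by
      simp only [hu']
      refine Continuous.div ?_ (hwcont.pow 2) (fun t => pow_ne_zero 2 (hw0 t))
      exact ((Complex.continuous_ofReal.comp hA'cont).mul hwcont).sub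
        ((Complex.continuous_ofReal.comp hAcont).mul
          (continuous_const.mul (Complex.continuous_ofReal.comp hφ''cont)))
    -- integration by parts
    have hibp := intervalIntegral.integral_mul_deriv_eq_deriv_mul (a := 0) (b := 2*π)
      (u := u) (v := v) (u' := u') (v' := fun t => v t * w t)
      (fun x _ => hud x) (fun x _ => hvd x) (hu'cont.intervalIntegrable 0 (2*π))
      ((hvcont.mul hwcont).intervalIntegrable 0 (2*π))
    -- integrand identity
    have hid : ∀ t : ℝ, u t * (v t * w t)
        = f t * Complex.exp (-(Complex.I * (((-((k:ℤ)+1)) : ℤ) : ℂ) * (t:ℂ))) := by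
      intro t
      rw [hf t]
      have h1 : u t * (v t * w t) = ((A t : ℝ):ℂ) * v t := by
        simp only [hu]
        rw [div_mul_eq_mul_div, div_eq_iff (hw0 t)]
        ring
      rw [h1]
      have h2 : Complex.I * ((g t : ℝ) : ℂ)
          = Complex.I * ((φ t : ℝ):ℂ) + -(Complex.I * (((-((k:ℤ)+1)) : ℤ) : ℂ) * (t:ℂ)) := by
        simp only [hg, hp]
        push_cast
        ring
      simp only [hv]
      rw [h2, Complex.exp_add]
      ring
    -- boundary terms vanish
    have hA2 : A (2*π) = A 0 := by have := hAper 0; rwa [zero_add] at this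
    have hφ'2 : deriv φ (2*π) = deriv φ 0 := by have := hφ'per 0; rwa [zero_add] at this
    have hφ2 : φ (2*π) = φ 0 + 2*π*m := by have := hφper 0; rwa [zero_add] at this
    have hbd : u (2*π) * v (2*π) - u 0 * v 0 = 0 := by
      have hu2 : u (2*π) = u 0 := by simp only [hu, hw, hA2, hφ'2]
      have hv2 : v (2*π) = v 0 := by
        have harg : Complex.I * ((φ (2*π) + p * (2*π) : ℝ):ℂ)
            = Complex.I * ((φ 0 + p * 0 : ℝ):ℂ)
              + (((m + (k:ℤ) + 1) : ℤ) : ℂ) * (2 * (π:ℂ) * Complex.I) := by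
          rw [hφ2]
          push_cast [hp]
          ring
        simp only [hv, hg]
        rw [harg, Complex.exp_add, Complex.exp_int_mul_two_pi_mul_I, mul_one]
      rw [hu2, hv2]; ring
    -- pointwise bound on the new integrand
    have hnorm : ∀ x ∈ Set.uIoc (0:ℝ) (2*π), ‖u' x * v x‖ ≤ K / (δ + p) := by
      intro x hx
      have hxI : x ∈ Set.Icc (0:ℝ) (2*π) := by
        rw [Set.uIoc_of_le (by positivity : (0:ℝ) ≤ 2*π)] at hx
        exact ⟨hx.1.le, hx.2⟩
      have hδx : δ + p ≤ deriv φ x + p := by linarith [hδle x hxI]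
      have hb0 : (0:ℝ) < δ + p := by positivity
      have hbx : (0:ℝ) < deriv φ x + p := add_pos (hφ'pos x) hppos
      have hvx : ‖v x‖ = 1 := by
        simp only [hv]
        rw [mul_comm]
        exact Complex.norm_exp_ofReal_mul_I _
      have hnum : ‖((deriv A x:ℝ):ℂ) * w x - ((A x:ℝ):ℂ) * (Complex.I * ((deriv (deriv φ) x:ℝ):ℂ))‖
          ≤ K * (deriv φ x + p) := by
        have h1 := norm_sub_le (((deriv A x:ℝ):ℂ) * w x)
          (((A x:ℝ):ℂ) * (Complex.I * ((deriv (deriv φ) x:ℝ):ℂ)))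
        simp only [norm_mul, Complex.norm_I, one_mul, Complex.norm_real, Real.norm_eq_abs] at h1
        rw [hwnorm x] at h1
        refine h1.trans ?_
        have e1 : |deriv A x| * (deriv φ x + p) ≤ M' * (deriv φ x + p) :=
          mul_le_mul_of_nonneg_right (hM'le x) hbx.le
        have e2 : |A x| * |deriv (deriv φ) x| ≤ M * (ε * (deriv φ x + p)) := by
          refine mul_le_mul ?_ ((hφ'' x).trans ?_) (abs_nonneg _) hM0
          · rw [abs_of_pos (hApos x)]; exact hMle x
          · nlinarith [hφ'pos x]
        rw [hKdef]
        nlinarith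
      calc ‖u' x * v x‖ = ‖u' x‖ := by rw [norm_mul, hvx, mul_one]
        _ = ‖((deriv A x:ℝ):ℂ) * w x - ((A x:ℝ):ℂ) * (Complex.I * ((deriv (deriv φ) x:ℝ):ℂ))‖
              / (deriv φ x + p)^2 := by
            simp only [hu']
            rw [norm_div, norm_pow, hwnorm x]
        _ ≤ (K * (deriv φ x + p)) / (deriv φ x + p)^2 := by gcongr
        _ = K / (deriv φ x + p) := by
            field_simp
        _ ≤ K / (δ + p) := by gcongr
    -- put things together
    have hIeq : (∫ t in (0:ℝ)..(2*π),
          f t * Complex.exp (-(Complex.I * (((-((k:ℤ)+1)) : ℤ) : ℂ) * (t:ℂ))))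
        = -(∫ t in (0:ℝ)..(2*π), u' t * v t) := by
      have h2 : (∫ t in (0:ℝ)..(2*π),
            f t * Complex.exp (-(Complex.I * (((-((k:ℤ)+1)) : ℤ) : ℂ) * (t:ℂ))))
          = ∫ t in (0:ℝ)..(2*π), u t * (v t * w t) :=
        intervalIntegral.integral_congr (fun x _ => (hid x).symm)
      rw [h2, hibp]
      linear_combination hbd
    have hnormInt : ‖∫ t in (0:ℝ)..(2*π), u' t * v t‖ ≤ K/(δ+p) * |2*π - 0| :=
      intervalIntegral.norm_integral_le_of_norm_le_const hnorm
    rw [fourierCoef, norm_mul, hIeq, norm_neg]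
    have hc1 : ‖(1 / (2 * (π:ℂ)))‖ = 1/(2*π) := by
      rw [show (1 / (2*(π:ℂ))) = (((1/(2*π) : ℝ)):ℂ) from by push_cast; ring]
      rw [Complex.norm_real, Real.norm_eq_abs, abs_of_pos (by positivity)]
    rw [hc1]
    calc 1/(2*π) * ‖∫ t in (0:ℝ)..(2*π), u' t * v t‖
        ≤ 1/(2*π) * (K/(δ+p) * |2*π - 0|) :=
          mul_le_mul_of_nonneg_left hnormInt (by positivity)
      _ = K/(δ+p) := by
          rw [show |2*π - 0| = 2*π from by rw [sub_zero]; exact abs_of_pos (by positivity)]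
          field_simp
  -- sum bound
  have hsum : (∑' k : ℕ, ‖fourierCoef f (-((k:ℤ)+1))‖^2) ≤ K^2 / δ := by
    apply Real.tsum_le_of_sum_range_le (fun n => sq_nonneg _)
    intro n
    have hterm : ∀ k : ℕ, ‖fourierCoef f (-((k:ℤ)+1))‖^2 ≤
        K^2 * (1/(δ+(k:ℝ)) - 1/(δ+(k:ℝ)+1)) := by
      intro k
      have h1 := hcoef k
      have h2 : ‖fourierCoef f (-((k:ℤ)+1))‖^2 ≤ (K / (δ + ((k:ℝ)+1)))^2 :=
        pow_le_pow_left₀ (norm_nonneg _) h1 2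
      refine h2.trans ?_
      have hδk : (0:ℝ) < δ + (k:ℝ) := by positivity
      have hδk1 : (0:ℝ) < δ + (k:ℝ) + 1 := by positivity
      have h3 : 1/(δ+(k:ℝ)) - 1/(δ+(k:ℝ)+1) = 1/((δ+(k:ℝ))*(δ+(k:ℝ)+1)) := by
        field_simp
        ring
      rw [h3, div_pow, mul_one_div]
      have h4 : δ + ((k:ℝ)+1) = δ + (k:ℝ) + 1 := by ring
      rw [h4]
      gcongr
      nlinarith
    calc ∑ k ∈ Finset.range n, ‖fourierCoef f (-((k:ℤ)+1))‖^2
        ≤ ∑ k ∈ Finset.range n, K^2 * (1/(δ+(k:ℝ)) - 1/(δ+(k:ℝ)+1)) :=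
          Finset.sum_le_sum fun k _ => hterm k
      _ = K^2 * ∑ k ∈ Finset.range n, ((fun j : ℕ => 1/(δ+(j:ℝ))) k
            - (fun j : ℕ => 1/(δ+(j:ℝ))) (k+1)) := by
          rw [Finset.mul_sum]
          congr 1
          ext k
          push_cast
          ring
      _ = K^2 * (1/(δ+(0:ℕ)) - 1/(δ+(n:ℝ))) := by
          rw [Finset.sum_range_sub' (fun j : ℕ => 1/(δ+(j:ℝ)))]
      _ ≤ K^2 / δ := by
          have hδn : (0:ℝ) < δ + (n:ℝ) := by positivity
          have h5 : (0:ℝ) ≤ 1/(δ+(n:ℝ)) := by positivity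
          have h6 : δ + ((0:ℕ):ℝ) = δ := by norm_num
          rw [h6, div_eq_mul_one_div (K^2) δ]
          nlinarith [mul_nonneg (sq_nonneg K) h5]
  -- value of ∫ ‖f‖²
  have hfnorm : (∫ t in (0:ℝ)..(2*π), ‖f t‖^2) = ∫ t in (0:ℝ)..(2*π), A t^2 := by
    apply intervalIntegral.integral_congr
    intro x _
    show ‖f x‖^2 = A x^2
    rw [hf x, norm_mul]
    have h1 : ‖Complex.exp (Complex.I * (φ x : ℂ))‖ = 1 := by
      rw [mul_comm]
      exact Complex.norm_exp_ofReal_mul_I _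
    rw [h1, mul_one, Complex.norm_real, Real.norm_eq_abs, abs_of_pos (hApos x)]
  have hJpos : 0 < ∫ t in (0:ℝ)..(2*π), A t^2 := by
    apply intervalIntegral.intervalIntegral_pos_of_pos_on
    · exact (hAcont.pow 2).intervalIntegrable 0 (2*π)
    · exact fun x _ => pow_pos (hApos x) 2
    · positivity
  set J := ∫ t in (0:ℝ)..(2*π), A t^2 with hJdef
  set C := M'^2 + ε^2 * M^2 with hCdef
  have hC0 : 0 ≤ C := by positivity
  rw [hfnorm]
  have hRHS : 8*π^2/J * C/δ * J = 8*π^2*C/δ := by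
    field_simp
  rw [hRHS]
  have hK2 : K^2 ≤ 2*C := by
    rw [hKdef, hCdef]
    nlinarith [sq_nonneg (M' - ε*M)]
  have h1 : 2*π * ∑' k : ℕ, ‖fourierCoef f (-((k:ℤ)+1))‖^2 ≤ 2*π * (K^2/δ) :=
    mul_le_mul_of_nonneg_left hsum (by positivity)
  refine h1.trans ?_
  rw [show 2*π*(K^2/δ) = (2*π*K^2)/δ from by ring, div_le_div_iff_of_pos_right hδpos]
  have h8 : 4*π*C ≤ 8*π^2*C := by
    nlinarith [mul_nonneg hC0 (by nlinarith [pi_gt_three] : (0:ℝ) ≤ 8*π^2 - 4*π)]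
  nlinarith [mul_le_mul_of_nonneg_left hK2 (by positivity : (0:ℝ) ≤ 2*π)]
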